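/- arXiv:1409.2603 — 4 statements merged into one kernel-verified Lean document; each statement's English description precedes it below -/
import Mathlib

section
/- Let A(j) = x_A + y_A·j be an arithmetic progression with y_A > 0, and let B : ℕ → ℝ be a strictly increasing sequence with |A(j) − B(j)| ≤ c·y_A for all j, where c ≥ 0 is a constant. Then for every x, |r(x, A) − r(x, B)| ≤ 3c + 1, where r(x, ·) counts the number of sequence elements ≤ x. -/
theorem rank_close_of_seq_close (xA yA c : ℝ) (hy : 0 < yA) (hc : 0 ≤ c)
    (B : ℕ → ℝ) (hB : StrictMono B)
    (hclose : ∀ j : ℕ, |(xA + yA * j) - B j| ≤ c * yA) (x : ℝ) :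
    |(Nat.card {j : ℕ | xA + yA * j ≤ x} : ℝ) -
      (Nat.card {j : ℕ | B j ≤ x} : ℝ)| ≤ 3 * c + 1 := by
  set S : ℝ → Set ℕ := fun t => {j : ℕ | xA + yA * j ≤ t} with hS
  set T : Set ℕ := {j : ℕ | B j ≤ x} with hT
  have hmem : ∀ t (j : ℕ), j ∈ S t ↔ (j : ℝ) ≤ (t - xA) / yA := by
    intro t j
    simp only [hS, Set.mem_setOf_eq]
    rw [le_div_iff₀ hy]
    constructor <;> intro h <;> nlinarith
  have hfin : ∀ t, (S t).Finite := by
    intro t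
    apply Set.Finite.subset (Set.finite_Iic ⌊(t - xA) / yA⌋₊)
    intro j hj
    exact Nat.le_floor ((hmem t j).1 hj)
  have hcard : ∀ t, xA ≤ t → (S t).ncard = ⌊(t - xA) / yA⌋₊ + 1 := by
    intro t ht
    have hnn : (0 : ℝ) ≤ (t - xA) / yA := div_nonneg (by linarith) hy.le
    have : S t = Set.Iic ⌊(t - xA) / yA⌋₊ := by
      ext j
      rw [hmem, Set.mem_Iic, Nat.le_floor_iff hnn]
    rw [this, ← Finset.coe_Iic, Set.ncard_coe_finset, Nat.card_Iic]
  have hcard0 : ∀ t, t < xA → (S t).ncard = 0 := by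
    intro t ht
    have : S t = ∅ := by
      ext j
      simp only [hS, Set.mem_setOf_eq, Set.mem_empty_iff_false, iff_false]
      have : (0:ℝ) ≤ yA * j := by positivity
      intro h; linarith
    simp [this]
  have hsub1 : T ⊆ S (x + c * yA) := by
    intro j hj
    have h := (abs_le.1 (hclose j)).2
    simp only [hS, hT, Set.mem_setOf_eq] at *
    linarith
  have hsub2 : S (x - c * yA) ⊆ T := by
    intro j hj
    have h := (abs_le.1 (hclose j)).1
    simp only [hS, hT, Set.mem_setOf_eq] at *
    linarith
  have hTfin : T.Finite := (hfin (x + c * yA)).subset hsub1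
  have hmono : ∀ s t, s ≤ t → (S s).ncard ≤ (S t).ncard := by
    intro s t hst
    apply Set.ncard_le_ncard _ (hfin t)
    intro j hj
    rw [hmem] at *
    have : (s - xA)/yA ≤ (t - xA)/yA := by gcongr <;> linarith
    linarith
  -- key gap bound
  have hgap : ((S (x + c * yA)).ncard : ℝ) ≤ ((S (x - c * yA)).ncard : ℝ) + 2 * c + 1 := by
    rcases lt_or_ge (x + c * yA) xA with h1 | h1
    · have hcy : (0:ℝ) ≤ c * yA := mul_nonneg hc hy.le
      rw [hcard0 _ h1, hcard0 _ (by linarith)]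
      push_cast; linarith
    rcases lt_or_ge (x - c * yA) xA with h2 | h2
    · rw [hcard0 _ h2, hcard _ h1]
      have hle : (⌊(x + c * yA - xA) / yA⌋₊ : ℝ) ≤ (x + c * yA - xA) / yA :=
        Nat.floor_le (div_nonneg (by linarith) hy.le)
      have : (x + c * yA - xA) / yA ≤ 2 * c := by
        rw [div_le_iff₀ hy]; nlinarith
      push_cast; linarith
    · rw [hcard _ h1, hcard _ h2]
      set u := (x - c * yA - xA) / yA with hu
      have heq : (x + c * yA - xA) / yA = u + 2 * c := by
        rw [hu, div_add' _ _ _ hy.ne']; congr 1; ring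
      have h3 : (⌊(x + c * yA - xA) / yA⌋₊ : ℝ) ≤ u + 2 * c := by
        rw [← heq]; exact Nat.floor_le (div_nonneg (by nlinarith) hy.le)
      have h4 : u < ⌊u⌋₊ + 1 := Nat.lt_floor_add_one u
      push_cast; linarith
  -- assemble
  have b1 : (T.ncard : ℝ) ≤ ((S (x + c * yA)).ncard : ℝ) := by
    exact_mod_cast Set.ncard_le_ncard hsub1 (hfin _)
  have b2 : ((S (x - c * yA)).ncard : ℝ) ≤ (T.ncard : ℝ) := by
    exact_mod_cast Set.ncard_le_ncard hsub2 hTfin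
  have m1 : ((S (x - c * yA)).ncard : ℝ) ≤ ((S x).ncard : ℝ) := by
    exact_mod_cast hmono _ _ (by nlinarith)
  have m2 : ((S x).ncard : ℝ) ≤ ((S (x + c * yA)).ncard : ℝ) := by
    exact_mod_cast hmono _ _ (by nlinarith)
  have gA : Nat.card {j : ℕ | xA + yA * j ≤ x} = (S x).ncard := by
    rw [Nat.card_coe_set_eq]
  have gB : Nat.card {j : ℕ | B j ≤ x} = T.ncard := by
    rw [Nat.card_coe_set_eq]
  rw [gA, gB, abs_sub_le_iff]
  constructor <;> linarith
end

section
/- Let A and B be strictly increasing sequences ℕ → ℝ tending to infinity with rank functions r(·, A), r(·, B). Fix x and set a = r(x, A), b = r(x, B) (so A(a−1) ≤ x < A(a) using 0-indexed counts). If A is arithmetic with common difference y > 0, b ≥ 1, and A(b−1) ≥ x, then b − a ≤ ⌈c⌉ + 1 whenever |A(j) − B(j)| ≤ c·y for all j. -/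
lemma lower_eq_Iio (S : Set ℕ) (hS : S.Finite)
    (hlow : ∀ ⦃i j : ℕ⦄, i ≤ j → j ∈ S → i ∈ S) :
    S = Set.Iio (Nat.card S) := by
  rcases S.eq_empty_or_nonempty with h | h
  · subst h; simp
  · have hF : hS.toFinset.Nonempty := by
      simpa [Set.Finite.toFinset_nonempty] using h
    set m := hS.toFinset.max' hF with hm
    have hmS : m ∈ S := by
      have := hS.toFinset.max'_mem hF
      simpa using this
    have hle : ∀ j ∈ S, j ≤ m := by
      intro j hj
      exact hS.toFinset.le_max' j (by simpa using hj)
    have hSeq : S = Set.Iic m := by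
      ext j
      constructor
      · intro hj; exact hle j hj
      · intro hj; exact hlow hj hmS
    rw [hSeq]
    have : Nat.card (Set.Iic m) = m + 1 := by
      simp [Nat.card_eq_card_toFinset, Set.toFinset_Iic]
    rw [this]
    ext j; simp [Nat.lt_succ_iff]

theorem rank_diff_case_one (xA y c : ℝ) (hy : 0 < y) (hc : 0 ≤ c)
    (B : ℕ → ℝ) (hB : StrictMono B)
    (hclose : ∀ j : ℕ, |(xA + y * j) - B j| ≤ c * y) (x : ℝ)
    (a b : ℕ) (ha : a = Nat.card {j : ℕ | xA + y * j ≤ x})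
    (hb : b = Nat.card {j : ℕ | B j ≤ x})
    (hb1 : 1 ≤ b) (hAb : x ≤ xA + y * ((b : ℝ) - 1)) :
    (b : ℤ) - a ≤ ⌈c⌉ + 1 := by
  set SA : Set ℕ := {j : ℕ | xA + y * j ≤ x} with hSA
  set SB : Set ℕ := {j : ℕ | B j ≤ x} with hSB
  have hlowA : ∀ ⦃i j : ℕ⦄, i ≤ j → j ∈ SA → i ∈ SA := by
    intro i j hij hj
    have : xA + y * i ≤ xA + y * j := by
      have : (i : ℝ) ≤ j := by exact_mod_cast hij
      nlinarith
    exact le_trans this hj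
  have hfinA : SA.Finite := by
    apply Set.Finite.subset (Set.finite_Iic ⌊(x - xA) / y⌋₊)
    intro j hj
    have hj' : xA + y * j ≤ x := hj
    have : (j : ℝ) ≤ (x - xA) / y := by
      rw [le_div_iff₀ hy]; nlinarith
    exact Nat.le_floor this
  have hlowB : ∀ ⦃i j : ℕ⦄, i ≤ j → j ∈ SB → i ∈ SB := by
    intro i j hij hj
    exact le_trans (hB.monotone hij) hj
  have hfinB : SB.Finite := by
    by_contra hinf
    have : Nat.card SB = 0 := @Nat.card_eq_zero_of_infinite _ (Set.infinite_coe_iff.2 hinf)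
    omega
  have hAeq := lower_eq_Iio SA hfinA hlowA
  have hBeq := lower_eq_Iio SB hfinB hlowB
  -- A a > x
  have hAa : x < xA + y * a := by
    by_contra hcon
    push_neg at hcon
    have : a ∈ SA := hcon
    rw [hAeq, ← ha] at this
    exact absurd this (by simp)
  -- B (b-1) ≤ x
  have hBb : B (b - 1) ≤ x := by
    have : b - 1 ∈ SB := by
      rw [hBeq, ← hb]
      simp [Set.mem_Iio]; omega
    exact this
  have hcl := hclose (b - 1)
  have hcast : ((b - 1 : ℕ) : ℝ) = (b : ℝ) - 1 := by
    push_cast [Nat.cast_sub hb1]; ring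
  rw [hcast] at hcl
  have habs := abs_le.1 hcl
  have key : (b : ℝ) - 1 < (a : ℝ) + c := by
    have h1 : xA + y * ((b:ℝ) - 1) ≤ B (b-1) + c * y := by linarith [habs.1]
    have h2 : xA + y * ((b:ℝ) - 1) ≤ x + c * y := by linarith
    nlinarith
  have hcc : c ≤ (⌈c⌉ : ℝ) := Int.le_ceil c
  have : ((b : ℤ) - a : ℝ) < ((⌈c⌉ + 1 + 1 : ℤ) : ℝ) := by push_cast; linarith
  have : (b : ℤ) - a < ⌈c⌉ + 1 + 1 := by exact_mod_cast this
  omega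
end

section
/- Let E = (e_j) be an arithmetic divisor sequence and D = (d_j) a strictly increasing divisor sequence with |d_j − e_j| ≤ c for all j, with all divisors eventually positive and v₁,...,vₙ > 0 given scores. For each i, let Aᵢ(j) = e_j/vᵢ and Bᵢ(j) = d_j/vᵢ. Then there is a constant c′ (depending only on c) such that for all x, |Σᵢ r(x, Aᵢ) − Σᵢ r(x, Bᵢ)| ≤ c′·n. -/
private noncomputable def gcard (t : ℝ) : ℕ := Nat.card {j : ℕ | (j:ℝ) ≤ t}

private lemma gcard_finite (t : ℝ) : {j : ℕ | (j:ℝ) ≤ t}.Finite := by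
  apply (Set.finite_Iic ⌈t⌉₊).subset
  intro j hj
  exact Set.mem_Iic.mpr (Nat.cast_le.mp (le_trans hj (Nat.le_ceil t)))

private lemma gcard_mono {t₁ t₂ : ℝ} (h : t₁ ≤ t₂) : gcard t₁ ≤ gcard t₂ :=
  Nat.card_mono (gcard_finite t₂) (fun j hj => le_trans hj h)

private lemma gcard_eq (t : ℝ) (ht : 0 ≤ t) : gcard t = ⌊t⌋₊ + 1 := by
  unfold gcard
  have : {j : ℕ | (j:ℝ) ≤ t} = Set.Iic ⌊t⌋₊ := by
    ext j; simp [Nat.le_floor_iff ht]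
  rw [this]; simp [Nat.card_Iic]

private lemma gcard_neg (t : ℝ) (ht : t < 0) : gcard t = 0 := by
  unfold gcard
  have : {j : ℕ | (j:ℝ) ≤ t} = ∅ := by
    ext j; simp only [Set.mem_setOf_eq, Set.mem_empty_iff_false, iff_false, not_le]
    exact lt_of_lt_of_le ht (Nat.cast_nonneg j)
  rw [this]; simp

private lemma gcard_diff (t δ : ℝ) (hδ : 0 ≤ δ) :
    (gcard (t + δ) : ℝ) ≤ (gcard t : ℝ) + δ + 1 := by
  rcases lt_or_ge (t + δ) 0 with h | h
  · rw [gcard_neg _ h]; push_cast; positivity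
  · rw [gcard_eq _ h]
    have h1 : (⌊t + δ⌋₊ : ℝ) ≤ t + δ := Nat.floor_le h
    rcases lt_or_ge t 0 with h2 | h2
    · rw [gcard_neg _ h2]; push_cast; linarith
    · rw [gcard_eq _ h2]
      have h3 : t < (⌊t⌋₊ : ℝ) + 1 := Nat.lt_floor_add_one t
      push_cast; linarith

theorem total_rank_close (α β c : ℝ) (hβ : 0 < β) (hc : 0 ≤ c)
    (d : ℕ → ℝ) (hd : StrictMono d)
    (hclose : ∀ j : ℕ, |d j - (α + β * j)| ≤ c)
    (n : ℕ) (v : Fin n → ℝ) (hv : ∀ i, 0 < v i) :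
    ∃ c' : ℝ, ∀ x : ℝ,
      |(∑ i, (Nat.card {j : ℕ | (α + β * j) / v i ≤ x} : ℝ)) -
        (∑ i, (Nat.card {j : ℕ | d j / v i ≤ x} : ℝ))| ≤ c' * n := by
  refine ⟨2 * c / β + 1, fun x => ?_⟩
  have key : ∀ i : Fin n,
      |(Nat.card {j : ℕ | (α + β * j) / v i ≤ x} : ℝ) -
        (Nat.card {j : ℕ | d j / v i ≤ x} : ℝ)| ≤ 2 * c / β + 1 := by
    intro i
    set y : ℝ := x * v i with hy
    set t : ℝ := (y - α) / β with hts
    have hs1 : {j : ℕ | (α + β * j) / v i ≤ x} = {j : ℕ | (j:ℝ) ≤ t} := by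
      ext j
      simp only [Set.mem_setOf_eq, hts, hy]
      rw [div_le_iff₀ (hv i), le_div_iff₀ hβ]
      constructor <;> intro <;> linarith
    have hs2 : {j : ℕ | d j / v i ≤ x} = {j : ℕ | d j ≤ y} := by
      ext j
      simp only [Set.mem_setOf_eq, hy]
      rw [div_le_iff₀ (hv i)]
    rw [hs1, hs2]
    have hsub : {j : ℕ | d j ≤ y} ⊆ {j : ℕ | (j:ℝ) ≤ t + c / β} := by
      intro j hj
      simp only [Set.mem_setOf_eq] at hj ⊢
      have h1 := (abs_le.mp (hclose j)).1
      rw [hts, ← add_div, le_div_iff₀ hβ]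
      linarith [mul_comm (j:ℝ) β]
    have hsup : {j : ℕ | (j:ℝ) ≤ t - c / β} ⊆ {j : ℕ | d j ≤ y} := by
      intro j hj
      simp only [Set.mem_setOf_eq, hts] at hj ⊢
      have h2 := (abs_le.mp (hclose j)).2
      have hj' : (j:ℝ) ≤ (y - α - c) / β := by rw [sub_div]; exact hj
      rw [le_div_iff₀ hβ] at hj'
      linarith [mul_comm (j:ℝ) β]
    have hA : Nat.card {j : ℕ | d j ≤ y} ≤ gcard (t + c / β) :=
      Nat.card_mono (gcard_finite _) hsub
    have hB : gcard (t - c / β) ≤ Nat.card {j : ℕ | d j ≤ y} :=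
      Nat.card_mono ((gcard_finite (t + c / β)).subset hsub) hsup
    have hcβ : 0 ≤ c / β := div_nonneg hc hβ.le
    have hC : gcard (t - c / β) ≤ gcard t := gcard_mono (by linarith)
    have hD : gcard t ≤ gcard (t + c / β) := gcard_mono (by linarith)
    have hE : (gcard (t + c / β) : ℝ) ≤ (gcard (t - c / β) : ℝ) + 2 * c / β + 1 := by
      have h := gcard_diff (t - c / β) (2 * c / β) (by positivity)
      have heq : t - c / β + 2 * c / β = t + c / β := by ring
      rw [heq] at h
      exact h
    have hA' : (Nat.card {j : ℕ | d j ≤ y} : ℝ) ≤ (gcard (t + c / β) : ℝ) := Nat.cast_le.mpr hA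
    have hB' : (gcard (t - c / β) : ℝ) ≤ (Nat.card {j : ℕ | d j ≤ y} : ℝ) := Nat.cast_le.mpr hB
    have hC' : (gcard (t - c / β) : ℝ) ≤ (gcard t : ℝ) := Nat.cast_le.mpr hC
    have hD' : (gcard t : ℝ) ≤ (gcard (t + c / β) : ℝ) := Nat.cast_le.mpr hD
    show |(gcard t : ℝ) - (Nat.card {j : ℕ | d j ≤ y} : ℝ)| ≤ 2 * c / β + 1
    rw [abs_le]
    constructor <;> linarith
  calc |(∑ i, (Nat.card {j : ℕ | (α + β * j) / v i ≤ x} : ℝ)) -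
        (∑ i, (Nat.card {j : ℕ | d j / v i ≤ x} : ℝ))|
      = |∑ i, ((Nat.card {j : ℕ | (α + β * j) / v i ≤ x} : ℝ) -
          (Nat.card {j : ℕ | d j / v i ≤ x} : ℝ))| := by rw [Finset.sum_sub_distrib]
    _ ≤ ∑ i, |(Nat.card {j : ℕ | (α + β * j) / v i ≤ x} : ℝ) -
          (Nat.card {j : ℕ | d j / v i ≤ x} : ℝ)| := Finset.abs_sum_le_sum_abs _ _
    _ ≤ ∑ _i : Fin n, (2 * c / β + 1) := Finset.sum_le_sum (fun i _ => key i)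
    _ = (2 * c / β + 1) * n := by simp; ring
end

section
/- Let v₁,...,vₙ > 0 be scores and d₀ < d₁ < d₂ < ... a divisor sequence of positive reals tending to infinity. Let τ be the k-th smallest element of the multiset union of the sequences Aᵢ(j) = d_j/vᵢ. Define the allocation aᵢ = |{j : d_j/vᵢ ≤ τ}|. Then Σᵢ aᵢ ≥ k and Σᵢ aᵢ ≤ k + n − 1. -/
/-- τ is the k-th smallest element (1-indexed, with multiplicity) of the multiset
union of the sequences `A i`. -/
def IsKthSmallest {n : ℕ} (A : Fin n → ℕ → ℝ) (k : ℕ) (τ : ℝ) : Prop :=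
  (∃ i j, A i j = τ) ∧
  (∑ i, Nat.card {j : ℕ | A i j < τ}) < k ∧
  k ≤ ∑ i, Nat.card {j : ℕ | A i j ≤ τ}

theorem allocation_bounds {n k : ℕ} (v : Fin n → ℝ) (hv : ∀ i, 0 < v i)
    (d : ℕ → ℝ) (hd : StrictMono d) (hdpos : ∀ j, 0 < d j)
    (hTop : Filter.Tendsto d Filter.atTop Filter.atTop)
    (hk : 1 ≤ k) (τ : ℝ)
    (hτ : IsKthSmallest (fun i j => d j / v i) k τ) :
    k ≤ ∑ i, Nat.card {j : ℕ | d j / v i ≤ τ} ∧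
    ∑ i, Nat.card {j : ℕ | d j / v i ≤ τ} ≤ k + n - 1 := by
  obtain ⟨-, hlt, hle⟩ := hτ
  refine ⟨hle, ?_⟩
  have key : ∀ i, Nat.card {j : ℕ | d j / v i ≤ τ} ≤ Nat.card {j : ℕ | d j / v i < τ} + 1 := by
    intro i
    have hfin : {j : ℕ | d j / v i ≤ τ}.Finite := by
      obtain ⟨N, hN⟩ := (hTop.eventually_gt_atTop (τ * v i)).exists_forall_of_atTop
      refine Set.Finite.subset (Set.finite_Iio N) ?_
      intro j hj
      by_contra h
      have hjN : N ≤ j := le_of_not_gt h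
      have := hN j hjN
      have : d j ≤ τ * v i := (div_le_iff₀ (hv i)).mp hj
      linarith [hN j hjN]
    have hsub : {j : ℕ | d j / v i ≤ τ} ⊆ {j : ℕ | d j / v i < τ} ∪ {j : ℕ | d j / v i = τ} := by
      intro j hj
      simp only [Set.mem_setOf_eq, Set.mem_union] at hj ⊢
      exact lt_or_eq_of_le hj
    have hsub1 : {j : ℕ | d j / v i = τ}.Subsingleton := by
      intro a ha b hb
      have hmono : StrictMono (fun j => d j / v i) := fun a b hab =>
        (div_lt_div_iff_of_pos_right (hv i)).mpr (hd hab)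
      exact hmono.injective (ha.trans hb.symm)
    have hfin' : ({j : ℕ | d j / v i < τ} ∪ {j : ℕ | d j / v i = τ} : Set ℕ).Finite :=
      by
        have h1 : {j : ℕ | d j / v i < τ} ⊆ {j : ℕ | d j / v i ≤ τ} := Set.setOf_subset_setOf.mpr (fun j => le_of_lt)
        have h2 : {j : ℕ | d j / v i = τ} ⊆ {j : ℕ | d j / v i ≤ τ} := Set.setOf_subset_setOf.mpr (fun j => le_of_eq)
        exact (hfin.subset h1).union (hfin.subset h2)
    calc Nat.card {j : ℕ | d j / v i ≤ τ}
        ≤ Nat.card ({j : ℕ | d j / v i < τ} ∪ {j : ℕ | d j / v i = τ} : Set ℕ) := by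
          exact Nat.card_mono hfin' hsub
      _ ≤ Nat.card {j : ℕ | d j / v i < τ} + Nat.card {j : ℕ | d j / v i = τ} := by
          simp only [Nat.card_coe_set_eq]
          exact Set.ncard_union_le _ _
      _ ≤ Nat.card {j : ℕ | d j / v i < τ} + 1 := by
          gcongr
          rcases hsub1.eq_empty_or_singleton with h | ⟨x, h⟩ <;> simp [h]
  calc ∑ i, Nat.card {j : ℕ | d j / v i ≤ τ}
      ≤ ∑ i, (Nat.card {j : ℕ | d j / v i < τ} + 1) := Finset.sum_le_sum fun i _ => key i
    _ = (∑ i, Nat.card {j : ℕ | d j / v i < τ}) + n := by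
        rw [Finset.sum_add_distrib]; simp
    _ ≤ k + n - 1 := by
        have hlt' : (∑ i, Nat.card {j : ℕ | d j / v i < τ}) < k := hlt
        omega
end
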